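/- Fix s ∈ (0,1). There exist constants c, C > 0 (depending only on s) such that for every real k ≥ 4, c·k^s ≤ ∫₀^{1/2} u^{-1-2s}·(1 - (1-u²)^{k/2}) du ≤ C·k^s. -/
import Mathlib

open MeasureTheory Real Set intervalIntegral

set_option maxHeartbeats 2000000 in
theorem stmt3 (s : ℝ) (hs0 : 0 < s) (hs1 : s < 1) :
    ∃ c C : ℝ, 0 < c ∧ 0 < C ∧ ∀ k : ℝ, 4 ≤ k →
      c * k ^ s ≤ (∫ u in (0:ℝ)..(1/2), u ^ (-1 - 2 * s) * (1 - (1 - u ^ 2) ^ (k / 2))) ∧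
      (∫ u in (0:ℝ)..(1/2), u ^ (-1 - 2 * s) * (1 - (1 - u ^ 2) ^ (k / 2))) ≤ C * k ^ s := by
  have h4s : (1:ℝ) < (4:ℝ) ^ s :=
    (Real.one_lt_rpow_iff_of_pos (by norm_num)).mpr (Or.inl ⟨by norm_num, hs0⟩)
  have hexp : Real.exp (-(1/8)) < 1 := Real.exp_lt_one_iff.mpr (by norm_num)
  have hs1' : (0:ℝ) < 1 - s := by linarith
  have hsne : (2*s : ℝ) ≠ 0 := by positivity
  have hene : (-1-2*s : ℝ) ≠ 0 := by intro h; linarith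
  have hene' : (-1-2*s : ℝ) ≠ -1 := by intro h; linarith
  refine ⟨(1 - Real.exp (-(1/8))) * ((4:ℝ)^s - 1) / (2*s), 1/(4*(1-s)) + 1/(2*s), ?_, ?_, ?_⟩
  · apply div_pos (mul_pos (by linarith) (by linarith)) (by linarith)
  · positivity
  intro k hk
  have hk0 : (0:ℝ) < k := by linarith
  have hk2 : (1:ℝ) ≤ k/2 := by linarith
  obtain ⟨r, hr_def⟩ : ∃ r : ℝ, r = k ^ (-(1/2) : ℝ) := ⟨_, rfl⟩
  have hr0 : 0 < r := hr_def ▸ Real.rpow_pos_of_pos hk0 _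
  have h4 : ((4:ℝ)) ^ (-(1/2):ℝ) = 1/2 := by
    rw [Real.rpow_neg (by norm_num), ← Real.sqrt_eq_rpow,
      show (4:ℝ) = 2^2 by norm_num, Real.sqrt_sq (by norm_num)]
    norm_num
  have hr_le : r ≤ 1/2 := by
    rw [← h4, hr_def]; exact Real.rpow_le_rpow_of_nonpos (by norm_num) hk (by norm_num)
  have hrpow : ∀ t : ℝ, r ^ t = k ^ (-(1/2)*t) := fun t => by
    rw [hr_def, ← Real.rpow_mul hk0.le]
  have hrs : r ^ (-(2*s)) = k ^ s := by
    rw [hrpow, show (-(1/2):ℝ)*(-(2*s)) = s by ring]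
  have hr2 : r/2 = (4*k) ^ (-(1/2):ℝ) := by
    rw [Real.mul_rpow (by norm_num) hk0.le, h4, hr_def]; ring
  have h42 : (r/2) ^ (-(2*s)) = 4^s * k^s := by
    rw [hr2, ← Real.rpow_mul (by positivity),
      show (-(1/2):ℝ)*(-(2*s)) = s by ring, Real.mul_rpow (by norm_num) hk0.le]
  -- pointwise bounds
  have key : ∀ u : ℝ, 0 ≤ u → u ≤ 1/2 →
      0 ≤ 1 - (1-u^2)^(k/2) ∧ 1 - (1-u^2)^(k/2) ≤ k/2 * u^2 := by
    intro u hu0 hu1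
    have hu2 : u^2 ≤ 1 := by nlinarith
    have h1 : (1-u^2)^(k/2) ≤ 1 := Real.rpow_le_one (by nlinarith) (by nlinarith) (by linarith)
    refine ⟨by linarith, ?_⟩
    have hb := one_add_mul_self_le_rpow_one_add (s := -(u^2)) (by linarith) hk2
    rw [show (1 + -(u^2) : ℝ) = 1 - u^2 by ring] at hb
    nlinarith
  have hnonneg : ∀ u : ℝ, 0 ≤ u → u ≤ 1/2 →
      0 ≤ u ^ (-1-2*s) * (1 - (1-u^2)^(k/2)) := fun u hu0 hu1 =>
    mul_nonneg (Real.rpow_nonneg hu0 _) (key u hu0 hu1).1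
  -- integrability
  have hg_int : IntervalIntegrable (fun u : ℝ => k/2 * u ^ (1-2*s)) volume 0 (1/2) :=
    (intervalIntegrable_rpow' (by linarith)).const_mul _
  have hcont : ContinuousOn (fun u : ℝ => u ^ (-1-2*s) * (1 - (1-u^2)^(k/2))) (Ioc 0 (1/2:ℝ)) := by
    apply ContinuousOn.mul
    · exact continuousOn_id.rpow_const (fun u hu => Or.inl (ne_of_gt hu.1))
    · apply continuousOn_const.sub
      apply ContinuousOn.rpow_const
      · fun_prop
      · intro u hu; left; nlinarith [hu.1, hu.2]
  have hbound : ∀ u : ℝ, 0 < u → u ≤ 1/2 →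
      u ^ (-1-2*s) * (1 - (1-u^2)^(k/2)) ≤ k/2 * u ^ (1-2*s) := by
    intro u hu0 hu1
    have hmul : u ^ (-1-2*s) * u^2 = u ^ (1-2*s) := by
      rw [← Real.rpow_natCast u 2, ← Real.rpow_add hu0]
      congr 1
      push_cast; ring
    calc u ^ (-1-2*s) * (1 - (1-u^2)^(k/2))
        ≤ u ^ (-1-2*s) * (k/2 * u^2) :=
          mul_le_mul_of_nonneg_left (key u hu0.le hu1).2 (Real.rpow_nonneg hu0.le _)
      _ = k/2 * u ^ (1-2*s) := by rw [← hmul]; ring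
  have hf_int : IntervalIntegrable
      (fun u : ℝ => u ^ (-1-2*s) * (1 - (1-u^2)^(k/2))) volume 0 (1/2) := by
    rw [intervalIntegrable_iff_integrableOn_Ioc_of_le (by norm_num)]
    apply Integrable.mono'
      ((intervalIntegrable_iff_integrableOn_Ioc_of_le (by norm_num)).mp hg_int)
      (hcont.aestronglyMeasurable measurableSet_Ioc)
    filter_upwards [ae_restrict_mem measurableSet_Ioc] with u hu
    rw [Real.norm_eq_abs, abs_of_nonneg (hnonneg u hu.1.le hu.2)]
    exact hbound u hu.1 hu.2
  have hsub : ∀ a b : ℝ, 0 ≤ a → a ≤ b → b ≤ 1/2 → IntervalIntegrable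
      (fun u : ℝ => u ^ (-1-2*s) * (1 - (1-u^2)^(k/2))) volume a b := by
    intro a b ha hab hb
    apply hf_int.mono_set
    rw [Set.uIcc_of_le hab, Set.uIcc_of_le (by norm_num : (0:ℝ) ≤ 1/2)]
    exact Set.Icc_subset_Icc ha hb
  have hr20 : 0 ≤ r/2 := by positivity
  have hr2r : r/2 ≤ r := by linarith
  have hr2le : r/2 ≤ 1/2 := by linarith
  have int_nonneg : ∀ a b : ℝ, 0 ≤ a → a ≤ b → b ≤ 1/2 →
      0 ≤ ∫ u in a..b, u ^ (-1-2*s) * (1 - (1-u^2)^(k/2)) := by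
    intro a b ha hab hb
    apply intervalIntegral.integral_nonneg hab
    intro u hu
    exact hnonneg u (le_trans ha hu.1) (le_trans hu.2 hb)
  -- split
  have hsplit1 : (∫ u in (0:ℝ)..(1/2), u ^ (-1-2*s) * (1 - (1-u^2)^(k/2)))
      = (∫ u in (0:ℝ)..(r/2), u ^ (-1-2*s) * (1 - (1-u^2)^(k/2)))
      + (∫ u in (r/2)..r, u ^ (-1-2*s) * (1 - (1-u^2)^(k/2)))
      + (∫ u in r..(1/2), u ^ (-1-2*s) * (1 - (1-u^2)^(k/2))) := by
    rw [intervalIntegral.integral_add_adjacent_intervals (hsub _ _ le_rfl hr20 hr2le)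
      (hsub _ _ hr20 hr2r hr_le),
      intervalIntegral.integral_add_adjacent_intervals (hsub _ _ le_rfl hr0.le hr_le)
      (hsub _ _ hr0.le hr_le le_rfl)]
  -- lower bound on middle piece
  have hmid : (1 - Real.exp (-(1/8))) * ((4:ℝ)^s - 1) / (2*s) * k^s
      ≤ ∫ u in (r/2)..r, u ^ (-1-2*s) * (1 - (1-u^2)^(k/2)) := by
    have hpt : ∀ u ∈ Icc (r/2) r,
        (1 - Real.exp (-(1/8))) * u ^ (-1-2*s) ≤ u ^ (-1-2*s) * (1 - (1-u^2)^(k/2)) := by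
      intro u hu
      have hu0 : 0 < u := lt_of_lt_of_le (half_pos hr0) hu.1
      have hu1 : u ≤ 1/2 := le_trans hu.2 hr_le
      have hexpk : (1-u^2)^(k/2) ≤ Real.exp (-(1/8)) := by
        have hr2sq : (r/2)^2 = 1/(4*k) := by
          rw [hr2, ← Real.rpow_natCast ((4*k)^(-(1/2):ℝ)) 2, ← Real.rpow_mul (by positivity),
            show ((-(1/2):ℝ) * ((2:ℕ):ℝ)) = -1 by norm_num, Real.rpow_neg_one]
          rw [one_div]
        have h1 : (1-u^2) ≤ Real.exp (-(1/(4*k))) := by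
          have hsq : (r/2)^2 ≤ u^2 := pow_le_pow_left₀ hr20 hu.1 2
          rw [hr2sq] at hsq
          have := Real.add_one_le_exp (-(1/(4*k)))
          linarith
        calc (1-u^2)^(k/2) ≤ (Real.exp (-(1/(4*k))))^(k/2) :=
              Real.rpow_le_rpow (by nlinarith) h1 (by linarith)
          _ = Real.exp (-(1/(4*k)) * (k/2)) := (Real.exp_mul _ _).symm
          _ = Real.exp (-(1/8)) := by
              congr 1
              field_simp
              ring
      have hrp : (0:ℝ) ≤ u ^ (-1-2*s) := Real.rpow_nonneg hu0.le _
      calc (1 - Real.exp (-(1/8))) * u ^ (-1-2*s)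
          = u ^ (-1-2*s) * (1 - Real.exp (-(1/8))) := by ring
        _ ≤ u ^ (-1-2*s) * (1 - (1-u^2)^(k/2)) :=
            mul_le_mul_of_nonneg_left (by linarith) hrp
    have hlin : IntervalIntegrable
        (fun u : ℝ => (1 - Real.exp (-(1/8))) * u ^ (-1-2*s)) volume (r/2) r := by
      apply IntervalIntegrable.const_mul
      apply intervalIntegrable_rpow (Or.inr _)
      rw [Set.uIcc_of_le hr2r]
      intro h
      exact absurd h.1 (not_le.mpr (half_pos hr0))
    have hmono := intervalIntegral.integral_mono_on hr2r hlin
      (hsub _ _ hr20 hr2r hr_le) hpt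
    rw [intervalIntegral.integral_const_mul,
      integral_rpow (Or.inr ⟨hene', ?_⟩)] at hmono
    · calc (1 - Real.exp (-(1/8))) * ((4:ℝ)^s - 1) / (2*s) * k^s
          = (1 - Real.exp (-(1/8))) * ((r ^ (-1-2*s+1) - (r/2) ^ (-1-2*s+1)) / (-1-2*s+1)) := by
            rw [show (-1-2*s+1 : ℝ) = -(2*s) by ring, hrs, h42]
            field_simp
            ring
        _ ≤ _ := hmono
    · rw [Set.uIcc_of_le hr2r]
      intro h
      exact absurd h.1 (not_le.mpr (half_pos hr0))
  -- upper bound pieces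
  have hup1 : (∫ u in (0:ℝ)..r, u ^ (-1-2*s) * (1 - (1-u^2)^(k/2)))
      ≤ 1/(4*(1-s)) * k^s := by
    have hpt : ∀ u ∈ Icc (0:ℝ) r,
        u ^ (-1-2*s) * (1 - (1-u^2)^(k/2)) ≤ k/2 * u ^ (1-2*s) := by
      intro u hu
      rcases eq_or_lt_of_le hu.1 with h | h
      · rw [← h, Real.zero_rpow hene, zero_mul]
        have : (0:ℝ) ≤ (0:ℝ) ^ (1-2*s : ℝ) := Real.rpow_nonneg le_rfl _
        positivity
      · exact hbound u h (le_trans hu.2 hr_le)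
    have hgsub : IntervalIntegrable (fun u : ℝ => k/2 * u ^ (1-2*s)) volume 0 r := by
      apply hg_int.mono_set
      rw [Set.uIcc_of_le hr0.le, Set.uIcc_of_le (by norm_num : (0:ℝ) ≤ 1/2)]
      exact Set.Icc_subset_Icc le_rfl hr_le
    have h2 := intervalIntegral.integral_mono_on hr0.le
      (hsub _ _ le_rfl hr0.le hr_le) hgsub hpt
    rw [intervalIntegral.integral_const_mul, integral_rpow (Or.inl (by linarith))] at h2
    have heval : k/2 * ((r ^ (1-2*s+1) - (0:ℝ) ^ ((1:ℝ)-2*s+1)) / (1-2*s+1)) = 1/(4*(1-s)) * k^s := by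
      rw [Real.zero_rpow (by intro h; linarith), sub_zero,
        show (1-2*s+1 : ℝ) = 2-2*s by ring, hrpow,
        show (-(1/2):ℝ)*(2-2*s) = s - 1 by ring]
      have hks : k * k ^ (s-1) = k ^ s := by
        nth_rewrite 1 [← Real.rpow_one k]
        rw [← Real.rpow_add hk0]
        congr 1; ring
      rw [← hks]
      have h2s : (2-2*s : ℝ) ≠ 0 := by intro h; linarith
      have h1s : (1-s : ℝ) ≠ 0 := by intro h; linarith
      field_simp
      ring
    calc (∫ u in (0:ℝ)..r, u ^ (-1-2*s) * (1 - (1-u^2)^(k/2)))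
        ≤ k/2 * ((r ^ (1-2*s+1) - (0:ℝ) ^ ((1:ℝ)-2*s+1)) / (1-2*s+1)) := h2
      _ = 1/(4*(1-s)) * k^s := heval
  have hup2 : (∫ u in r..(1/2:ℝ), u ^ (-1-2*s) * (1 - (1-u^2)^(k/2)))
      ≤ 1/(2*s) * k^s := by
    have hpt : ∀ u ∈ Icc r (1/2:ℝ),
        u ^ (-1-2*s) * (1 - (1-u^2)^(k/2)) ≤ u ^ (-1-2*s) := by
      intro u hu
      have hu0 : 0 < u := lt_of_lt_of_le hr0 hu.1
      nth_rewrite 2 [← mul_one (u ^ (-1-2*s))]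
      apply mul_le_mul_of_nonneg_left _ (Real.rpow_nonneg hu0.le _)
      have h1 : 0 ≤ (1-u^2)^(k/2) := Real.rpow_nonneg (by nlinarith [hu.2]) _
      linarith
    have hint2 : IntervalIntegrable (fun u : ℝ => u ^ (-1-2*s)) volume r (1/2) := by
      apply intervalIntegrable_rpow (Or.inr _)
      rw [Set.uIcc_of_le hr_le]
      intro h
      exact absurd h.1 (not_le.mpr hr0)
    have h2 := intervalIntegral.integral_mono_on hr_le (hsub _ _ hr0.le hr_le le_rfl)
      hint2 hpt
    rw [integral_rpow (Or.inr ⟨hene', ?_⟩)] at h2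
    · have heval : ((1/2:ℝ) ^ (-1-2*s+1) - r ^ (-1-2*s+1)) / (-1-2*s+1) ≤ 1/(2*s) * k^s := by
        rw [show (-1-2*s+1 : ℝ) = -(2*s) by ring, hrs]
        rw [div_le_iff_of_neg (by linarith)]
        have hh1 : (0:ℝ) < (1/2:ℝ) ^ (-(2*s)) := Real.rpow_pos_of_pos (by norm_num) _
        have hh3 : 1/(2*s) * k^s * (-(2*s)) = -(k^s) := by field_simp
        linarith
      linarith
    · rw [Set.uIcc_of_le hr_le]
      intro h
      exact absurd h.1 (not_le.mpr hr0)
  have hsplit2 : (∫ u in (0:ℝ)..r, u ^ (-1-2*s) * (1 - (1-u^2)^(k/2)))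
      = (∫ u in (0:ℝ)..(r/2), u ^ (-1-2*s) * (1 - (1-u^2)^(k/2)))
      + (∫ u in (r/2)..r, u ^ (-1-2*s) * (1 - (1-u^2)^(k/2))) :=
    (intervalIntegral.integral_add_adjacent_intervals (hsub _ _ le_rfl hr20 hr2le)
      (hsub _ _ hr20 hr2r hr_le)).symm
  constructor
  · rw [hsplit1]
    have h1 := int_nonneg 0 (r/2) le_rfl hr20 hr2le
    have h3 := int_nonneg r (1/2) hr0.le hr_le le_rfl
    linarith [hmid]
  · rw [hsplit1, ← hsplit2]
    have hC : (1/(4*(1-s)) + 1/(2*s)) * k^s = 1/(4*(1-s)) * k^s + 1/(2*s) * k^s := by ring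
    rw [hC]
    exact add_le_add hup1 hup2
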